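/- Let F be an invertible IFS on a compact metric space X. If A is a Conley attractor of F with basin B, then A* := X \ B is a Conley attractor of the inverse IFS F* = {f⁻¹ : f ∈ F}, and the basin of A* with respect to F* is X \ A. -/

import Mathlib

open Set Filter Metric Topology

/-- The set map of an IFS: `F(S) = ⋃ i, fᵢ(S)`. -/
def IFSApply {ι X : Type*} (f : ι → X → X) (S : Set X) : Set X := ⋃ i, f i '' S

/-- `lim_{k→∞} F^k(closure U) = A` in the Hausdorff (extended) metric. -/
def ConleyLim {ι X : Type*} [MetricSpace X] (f : ι → X → X) (U A : Set X) : Prop :=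
  Filter.Tendsto (fun k => EMetric.hausdorffEdist ((IFSApply f)^[k] (closure U)) A)
    Filter.atTop (nhds 0)

/-- A compact set `A` is a Conley attractor of the IFS `f` if there is an open `U ⊇ A`
with `A = lim_{k→∞} F^k(closure U)`. -/
def IsConleyAttractor {ι X : Type*} [MetricSpace X] (f : ι → X → X) (A : Set X) : Prop :=
  IsCompact A ∧ ∃ U : Set X, IsOpen U ∧ A ⊆ U ∧ ConleyLim f U A

/-- The basin of a Conley attractor: the union of all open sets `U` as in the definition. -/
def conleyBasin {ι X : Type*} [MetricSpace X] (f : ι → X → X) (A : Set X) : Set X :=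
  ⋃₀ {U : Set X | IsOpen U ∧ A ⊆ U ∧ ConleyLim f U A}

/-- `lim_{k→∞} F^k(S) = A` in the Hausdorff (extended) metric. -/
def IFSLim {ι X : Type*} [MetricSpace X] (f : ι → X → X) (S A : Set X) : Prop :=
  Filter.Tendsto (fun k => EMetric.hausdorffEdist ((IFSApply f)^[k] S) A)
    Filter.atTop (nhds 0)

/-- `A` is a strict attractor of the IFS `f`. -/
def IsStrictAttractor {ι X : Type*} [MetricSpace X] (f : ι → X → X) (A : Set X) : Prop :=
  A.Nonempty ∧ IsCompact A ∧ IFSApply f A = A ∧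
  ∃ U : Set X, IsOpen U ∧ A ⊆ U ∧
    ∀ S : Set X, S.Nonempty → IsCompact S → S ⊆ U → IFSLim f S A

/-- The basin of a strict attractor: the largest open `U` with
`lim_{k→∞} F^k(S) = A` for all nonempty compact `S ⊆ U`. -/
def strictBasin {ι X : Type*} [MetricSpace X] (f : ι → X → X) (A : Set X) : Set X :=
  ⋃₀ {U : Set X | IsOpen U ∧
    ∀ S : Set X, S.Nonempty → IsCompact S → S ⊆ U → IFSLim f S A}

section AuxIFS
set_option linter.unusedSectionVars false
open EMetric
open scoped ENNReal


variable {ι X : Type*} [MetricSpace X] [CompactSpace X] [Fintype ι] [Nonempty ι]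


lemma IFSApply_mono (g : ι → X → X) : Monotone (IFSApply g) := fun _ _ h =>
  Set.iUnion_mono fun _ => Set.image_mono h

lemma IFSApply_iter_mono (g : ι → X → X) (k : ℕ) : Monotone ((IFSApply g)^[k]) :=
  (IFSApply_mono g).iterate k

lemma IFSApply_iUnion (g : ι → X → X) {J : Sort*} (S : J → Set X) :
    IFSApply g (⋃ j, S j) = ⋃ j, IFSApply g (S j) := by
  ext x; simp only [IFSApply, Set.image_iUnion, Set.mem_iUnion]; tauto

lemma IFSApply_iter_iUnion (g : ι → X → X) (k : ℕ) {J : Sort*} (S : J → Set X) :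
    (IFSApply g)^[k] (⋃ j, S j) = ⋃ j, (IFSApply g)^[k] (S j) := by
  induction k generalizing S with
  | zero => simp
  | succ k ih =>
    simp only [Function.iterate_succ_apply, IFSApply_iUnion, ih]

lemma IFSApply_union (g : ι → X → X) (S T : Set X) :
    IFSApply g (S ∪ T) = IFSApply g S ∪ IFSApply g T := by
  simp only [IFSApply, Set.image_union]; rw [Set.iUnion_union_distrib]

lemma IFSApply_isCompact (g : ι → X → X) (hg : ∀ i, Continuous (g i)) {S : Set X}
    (hS : IsCompact S) : IsCompact (IFSApply g S) :=
  isCompact_iUnion fun i => hS.image (hg i)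

lemma IFSApply_closure (f : ι → X ≃ₜ X) (S : Set X) :
    IFSApply (fun i => (f i : X → X)) (closure S)
      = closure (IFSApply (fun i => (f i : X → X)) S) := by
  unfold IFSApply
  rw [closure_iUnion_of_finite]
  exact Set.iUnion_congr fun i => (f i).image_closure S

lemma IFSApply_subset_iff (f : ι → X ≃ₜ X) {S T : Set X} :
    IFSApply (fun i => (f i : X → X)) S ⊆ T ↔
      IFSApply (fun i => ((f i).symm : X → X)) Tᶜ ⊆ Sᶜ := by
  simp only [IFSApply, Set.iUnion_subset_iff, Set.image_subset_iff]
  constructor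
  · intro h i x hx hS
    exact hx (by simpa using h i hS)
  · intro h i x hx
    by_contra hT
    exact h i hT (by simpa using hx)

lemma IFSApply_iter_subset_iff (f : ι → X ≃ₜ X) (k : ℕ) {S T : Set X} :
    (IFSApply (fun i => (f i : X → X)))^[k] S ⊆ T ↔
      (IFSApply (fun i => ((f i).symm : X → X)))^[k] Tᶜ ⊆ Sᶜ := by
  induction k generalizing S T with
  | zero => simp [Set.compl_subset_compl]
  | succ k ih =>
    rw [Function.iterate_succ_apply, Function.iterate_succ_apply', ih,
      Set.subset_compl_comm, IFSApply_subset_iff f, compl_compl]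

lemma IFSApply_iter_subset_iff' (f : ι → X ≃ₜ X) (k : ℕ) {S T : Set X} :
    (IFSApply (fun i => ((f i).symm : X → X)))^[k] S ⊆ T ↔
      (IFSApply (fun i => (f i : X → X)))^[k] Tᶜ ⊆ Sᶜ := by
  simpa using IFSApply_iter_subset_iff (fun i => (f i).symm) k (S := S) (T := T)

lemma conley_iff (S : ℕ → Set X) (A : Set X) :
    Filter.Tendsto (fun k => EMetric.hausdorffEdist (S k) A) Filter.atTop (nhds 0) ↔
      ∀ ε : ℝ≥0∞, 0 < ε → ∀ᶠ k in Filter.atTop,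
        (∀ x ∈ S k, infEdist x A < ε) ∧ (∀ a ∈ A, infEdist a (S k) < ε) := by
  constructor
  · intro h ε hε
    filter_upwards [h.eventually_lt_const hε] with k hk
    refine ⟨fun x hx => lt_of_le_of_lt (infEdist_le_hausdorffEdist_of_mem hx) hk,
      fun a ha => lt_of_le_of_lt ?_ hk⟩
    rw [show hausdorffEdist (S k) A = hausdorffEdist A (S k) from hausdorffEDist_comm]
    exact infEdist_le_hausdorffEdist_of_mem ha
  · intro h
    rw [ENNReal.tendsto_nhds_zero]
    intro ε hε
    filter_upwards [h ε hε] with k hk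
    exact hausdorffEdist_le_of_infEdist (fun x hx => (hk.1 x hx).le)
      (fun a ha => (hk.2 a ha).le)

end AuxIFS

theorem dual_repeller {ι X : Type*} [MetricSpace X] [CompactSpace X]
    [Fintype ι] [Nonempty ι] (f : ι → X ≃ₜ X)
    (A : Set X) (hA : IsConleyAttractor (fun i => (f i : X → X)) A) :
    IsConleyAttractor (fun i => ((f i).symm : X → X)) (conleyBasin (fun i => (f i : X → X)) A)ᶜ ∧
    conleyBasin (fun i => ((f i).symm : X → X)) (conleyBasin (fun i => (f i : X → X)) A)ᶜ
      = Aᶜ := by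
  classical
  obtain ⟨hAc, U₀, hU₀o, hAU₀, hU₀lim⟩ := hA
  set Fa : Set X → Set X := IFSApply (fun i => (f i : X → X)) with hFadef
  set Ga : Set X → Set X := IFSApply (fun i => ((f i).symm : X → X)) with hGadef
  set Fam : Set (Set X) :=
    {U : Set X | IsOpen U ∧ A ⊆ U ∧ ConleyLim (fun i => (f i : X → X)) U A} with hFamdef
  set B : Set X := conleyBasin (fun i => (f i : X → X)) A with hBdef
  have hBF : B = ⋃₀ Fam := rfl
  have hBopen : IsOpen B := isOpen_sUnion fun U hU => hU.1
  have hAB : A ⊆ B := fun x hx => ⟨U₀, ⟨hU₀o, hAU₀, hU₀lim⟩, hAU₀ hx⟩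
  have hFacompact : ∀ {S : Set X}, IsCompact S → IsCompact (Fa S) := fun hS =>
    IFSApply_isCompact _ (fun i => (f i).continuous) hS
  -- uniform continuity of Fa
  have hUC : ∀ ε : ENNReal, 0 < ε → ∃ δ : ENNReal, 0 < δ ∧ ∀ S T : Set X,
      (∀ x ∈ S, EMetric.infEdist x T < δ) → ∀ y ∈ Fa S, EMetric.infEdist y (Fa T) < ε := by
    intro ε hε
    have huc2 : ∀ i, ∃ δ : ENNReal, 0 < δ ∧
        ∀ a b : X, edist a b < δ → edist (f i a) (f i b) < ε := by
      intro i
      have huc : UniformContinuous ((f i : X → X)) :=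
        CompactSpace.uniformContinuous_of_continuous (f i).continuous
      rcases EMetric.uniformContinuous_iff.1 huc ε hε with ⟨δ, hδ, H⟩
      exact ⟨δ, hδ, fun a b h => H h⟩
    choose δ hδpos hδ using huc2
    refine ⟨Finset.univ.inf' Finset.univ_nonempty δ, ?_, ?_⟩
    · exact (Finset.lt_inf'_iff _).2 fun i _ => hδpos i
    · intro S T hST y hy
      rcases Set.mem_iUnion.1 hy with ⟨i, x, hxS, rfl⟩
      have h1 : EMetric.infEdist x T < δ i :=
        lt_of_lt_of_le (hST x hxS) (Finset.inf'_le _ (Finset.mem_univ i))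
      rcases EMetric.infEdist_lt_iff.1 h1 with ⟨t, htT, hxt⟩
      have hmem : f i t ∈ Fa T := Set.mem_iUnion.2 ⟨i, Set.mem_image_of_mem _ htT⟩
      exact lt_of_le_of_lt (EMetric.infEdist_le_edist_of_mem hmem) (hδ i x t hxt)
  -- invariance of A
  have h7 := (conley_iff (fun k => Fa^[k] (closure U₀)) A).1 hU₀lim
  have hFA : Fa A = A := by
    have hAclosed : IsClosed A := hAc.isClosed
    have hFAclosed : IsClosed (Fa A) := (hFacompact hAc).isClosed
    refine (EMetric.hausdorffEdist_zero_iff_eq_of_closed hFAclosed hAclosed).1 ?_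
    have key : ∀ ε : ENNReal, 0 < ε → EMetric.hausdorffEdist (Fa A) A ≤ ε := by
      intro ε hε
      have hε2 : (0 : ENNReal) < ε / 2 := ENNReal.half_pos hε.ne'
      rcases hUC (ε / 2) hε2 with ⟨δ, hδpos, hδ⟩
      set η := min δ (ε / 2) with hηdef
      have hη : 0 < η := lt_min hδpos hε2
      have hev := (h7 η hη).and ((tendsto_add_atTop_nat 1).eventually (h7 η hη))
      rcases hev.exists with ⟨k, ⟨hk1a, hk1b⟩, hk2a, hk2b⟩
      have hstep : Fa^[k + 1] (closure U₀) = Fa (Fa^[k] (closure U₀)) :=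
        Function.iterate_succ_apply' _ _ _
      refine EMetric.hausdorffEdist_le_of_infEdist ?_ ?_
      · intro y hy
        have hy2 : EMetric.infEdist y (Fa (Fa^[k] (closure U₀))) < ε / 2 :=
          hδ A _ (fun x hx => lt_of_lt_of_le (hk1b x hx) (min_le_left _ _)) y hy
        rw [← hstep] at hy2
        rcases EMetric.infEdist_lt_iff.1 hy2 with ⟨z, hz, hyz⟩
        have : EMetric.infEdist y A ≤ edist y z + EMetric.infEdist z A :=
          EMetric.infEdist_le_edist_add_infEdist
        calc EMetric.infEdist y A ≤ edist y z + EMetric.infEdist z A := this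
          _ ≤ ε / 2 + ε / 2 := add_le_add hyz.le ((hk2a z hz).le.trans (min_le_right _ _))
          _ = ε := ENNReal.add_halves ε
      · intro a ha
        have hup : ∀ y ∈ Fa (Fa^[k] (closure U₀)), EMetric.infEdist y (Fa A) < ε / 2 :=
          hδ _ A (fun x hx => lt_of_lt_of_le (hk1a x hx) (min_le_left _ _))
        rw [← hstep] at hup
        rcases EMetric.infEdist_lt_iff.1 (hk2b a ha) with ⟨z, hz, haz⟩
        calc EMetric.infEdist a (Fa A) ≤ edist a z + EMetric.infEdist z (Fa A) :=
            EMetric.infEdist_le_edist_add_infEdist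
          _ ≤ ε / 2 + ε / 2 := add_le_add (haz.le.trans (min_le_right _ _)) (hup z hz).le
          _ = ε := ENNReal.add_halves ε
    refine le_antisymm (ENNReal.le_of_forall_pos_le_add fun ε hε _ => ?_) zero_le
    have key' : Metric.hausdorffEDist (Fa A) A ≤ ε := key ε (by exact_mod_cast hε)
    simpa using key'
  have hFAk : ∀ k, Fa^[k] A = A := by
    intro k; induction k with
    | zero => rfl
    | succ k ih => rw [Function.iterate_succ_apply', ih, hFA]
  -- Fa maps basin members to basin members
  have hFam_F : ∀ U ∈ Fam, Fa U ∈ Fam := by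
    rintro U ⟨hUo, hAU, hUlim⟩
    refine ⟨isOpen_iUnion fun i => (f i).isOpenMap U hUo, ?_, ?_⟩
    · rw [← hFA]; exact IFSApply_mono _ hAU
    · show Filter.Tendsto (fun k => EMetric.hausdorffEdist (Fa^[k] (closure (Fa U))) A)
        Filter.atTop (nhds 0)
      have heq : (fun k => EMetric.hausdorffEdist (Fa^[k] (closure (Fa U))) A)
          = fun k => EMetric.hausdorffEdist (Fa^[k + 1] (closure U)) A := by
        funext k
        rw [hFadef, ← IFSApply_closure, ← Function.iterate_succ_apply]
      rw [heq]
      exact hUlim.comp (tendsto_add_atTop_nat 1)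
  have hFB : Fa B ⊆ B := by
    intro x hx
    rcases Set.mem_iUnion.1 hx with ⟨i, b, hb, rfl⟩
    rcases Set.mem_sUnion.1 (show b ∈ ⋃₀ Fam from hBF ▸ hb) with ⟨U, hU, hbU⟩
    exact Set.subset_sUnion_of_mem (hFam_F U hU)
      (Set.mem_iUnion.2 ⟨i, Set.mem_image_of_mem _ hbU⟩)
  -- key convergence lemma for compact subsets of the basin
  have hL0 : ∀ S : Set X, IsCompact S → S ⊆ B → ∀ ε : ENNReal, 0 < ε →
      ∀ᶠ k in Filter.atTop, ∀ x ∈ Fa^[k] S, EMetric.infEdist x A < ε := by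
    intro S hSc hSB ε hε
    have hcover : S ⊆ ⋃ U : Fam, (U : Set X) := by
      rw [← Set.sUnion_eq_iUnion]; exact hSB
    obtain ⟨t, ht⟩ := hSc.elim_finite_subcover (fun U : Fam => (U : Set X))
      (fun U => U.2.1) hcover
    have hev : ∀ᶠ k in Filter.atTop, ∀ U ∈ t, ∀ x ∈ Fa^[k] (closure (U : Set X)),
        EMetric.infEdist x A < ε := by
      rw [eventually_all_finset]
      intro U _
      exact ((conley_iff (fun k => Fa^[k] (closure (U : Set X))) A).1 U.2.2.2 ε hε).mono
        fun k hk => hk.1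
    filter_upwards [hev] with k hk x hx
    have hS2 : S ⊆ ⋃ U : {U : Fam // U ∈ t}, closure (U.1 : Set X) := by
      intro z hz
      rcases Set.mem_iUnion₂.1 (ht hz) with ⟨U, hUt, hzU⟩
      exact Set.mem_iUnion.2 ⟨⟨U, hUt⟩, subset_closure hzU⟩
    have hx2 : x ∈ ⋃ U : {U : ↥Fam // U ∈ t}, Fa^[k] (closure (U.1 : Set X)) := by
      have h := IFSApply_iter_mono (fun i => ((f i : X → X))) k hS2 hx
      rwa [IFSApply_iter_iUnion] at h
    rcases Set.mem_iUnion.1 hx2 with ⟨U, hxU⟩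
    exact hk U.1 U.2 x hxU
  -- the compact neighborhood W of A inside B
  obtain ⟨δW, hδW, hWB⟩ := hAc.exists_cthickening_subset_open hBopen hAB
  set W : Set X := thickening δW A with hWdef
  have hWo : IsOpen W := isOpen_thickening
  have hAW : A ⊆ W := self_subset_thickening hδW A
  have hclW : closure W ⊆ B := (closure_thickening_subset_cthickening δW A).trans hWB
  -- every point whose images all lie in B lies in B
  have hLV : ∀ x : X, (∀ i, f i x ∈ B) → x ∈ B := by
    intro x hx
    have hVo : IsOpen (⋂ i, (f i : X → X) ⁻¹' B) :=
      isOpen_iInter_of_finite fun i => hBopen.preimage (f i).continuous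
    have hxV : x ∈ ⋂ i, (f i : X → X) ⁻¹' B := Set.mem_iInter.2 hx
    obtain ⟨r, hr, hball⟩ := Metric.isOpen_iff.1 hVo x hxV
    set O : Set X := ball x (r / 2) with hOdef
    have hOcl : closure O ⊆ ⋂ i, (f i : X → X) ⁻¹' B :=
      closure_ball_subset_closedBall.trans
        ((closedBall_subset_ball (by linarith)).trans hball)
    refine ⟨O ∪ W, ⟨isOpen_ball.union hWo, hAW.trans Set.subset_union_right, ?_⟩,
      Or.inl (mem_ball_self (by linarith))⟩
    have hlow : ∀ k, A ⊆ Fa^[k] (closure (O ∪ W)) := by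
      intro k
      have := IFSApply_iter_mono (fun i => ((f i : X → X))) k
        (show A ⊆ closure (O ∪ W) from
          (hAW.trans Set.subset_union_right).trans subset_closure)
      rw [show (IFSApply fun i => ((f i : X → X)))^[k] A = Fa^[k] A from rfl, hFAk k] at this
      exact this
    have hFO : Fa (closure O) ⊆ B := by
      intro y hy
      rcases Set.mem_iUnion.1 hy with ⟨i, z, hz, rfl⟩
      exact Set.mem_iInter.1 (hOcl hz) i
    have hS1B : Fa (closure O) ∪ Fa (closure W) ⊆ B :=
      Set.union_subset hFO ((IFSApply_mono _ hclW).trans hFB)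
    have hS1c : IsCompact (Fa (closure O) ∪ Fa (closure W)) :=
      (hFacompact isClosed_closure.isCompact).union (hFacompact isClosed_closure.isCompact)
    refine (conley_iff (fun k => Fa^[k] (closure (O ∪ W))) A).2 ?_
    intro ε hε
    obtain ⟨N, hN⟩ := Filter.eventually_atTop.1 (hL0 _ hS1c hS1B ε hε)
    rw [Filter.eventually_atTop]
    refine ⟨N + 1, fun k hk => ⟨?_, fun a ha => ?_⟩⟩
    · intro y hy
      obtain ⟨k', rfl⟩ : ∃ k', k = k' + 1 := ⟨k - 1, by omega⟩
      apply hN k' (by omega)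
      rwa [closure_union, Function.iterate_succ_apply, hFadef, IFSApply_union] at hy
    · exact (EMetric.infEdist_zero_of_mem (hlow k ha)).trans_lt hε
  -- backward invariance of the dual repeller
  have hGAstar : ∀ k, Bᶜ ⊆ Ga^[k] Bᶜ := by
    have h1 : Bᶜ ⊆ Ga Bᶜ := by
      intro x hx
      by_contra hxG
      apply hx (hLV x ?_)
      intro i
      by_contra hfi
      exact hxG (Set.mem_iUnion.2 ⟨i, f i x, hfi, (f i).symm_apply_apply x⟩)
    intro k; induction k with
    | zero => simp
    | succ k ih =>
      rw [Function.iterate_succ_apply]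
      exact ih.trans (IFSApply_iter_mono _ k h1)
  -- dual convergence lemma
  have hL0s : ∀ S : Set X, IsCompact S → S ⊆ Aᶜ → ∀ ε : ENNReal, 0 < ε →
      ∀ᶠ k in Filter.atTop, ∀ x ∈ Ga^[k] S, EMetric.infEdist x Bᶜ < ε := by
    intro S hSc hSA ε hε
    obtain ⟨ρ, hρ, hρsub⟩ := hAc.exists_cthickening_subset_open hSc.isClosed.isOpen_compl
      (fun a ha has => (hSA has) ha)
    set T : Set X := {x : X | ε ≤ EMetric.infEdist x Bᶜ} with hTdef
    have hTc : IsClosed T := isClosed_le continuous_const EMetric.continuous_infEdist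
    have hTB : T ⊆ B := by
      intro x hx
      by_contra hxB
      have h0 : EMetric.infEdist x Bᶜ = 0 := EMetric.infEdist_zero_of_mem hxB
      rw [hTdef] at hx
      simp only [Set.mem_setOf_eq, h0, nonpos_iff_eq_zero] at hx
      exact hε.ne' hx
    filter_upwards [hL0 T hTc.isCompact hTB (ENNReal.ofReal ρ) (ENNReal.ofReal_pos.2 hρ)]
      with k hk
    have h2 : Fa^[k] T ⊆ Sᶜ := by
      intro x hx
      have hxW : x ∈ thickening ρ A := mem_thickening_iff_infEdist_lt.2 (hk x hx)
      exact hρsub (thickening_subset_cthickening ρ A hxW)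
    have h1 : Ga^[k] S ⊆ Tᶜ := by
      rw [hGadef]
      refine (IFSApply_iter_subset_iff' f k).2 ?_
      rwa [compl_compl]
    intro x hx
    exact lt_of_not_ge fun hle => (h1 hx) hle
  have hBcc : IsCompact Bᶜ := hBopen.isClosed_compl.isCompact
  have hBcW : Bᶜ ⊆ (closure W)ᶜ := Set.compl_subset_compl.2 hclW
  constructor
  · refine ⟨hBcc, (closure W)ᶜ, isClosed_closure.isOpen_compl, hBcW, ?_⟩
    refine (conley_iff (fun k => Ga^[k] (closure (closure W)ᶜ)) Bᶜ).2 ?_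
    intro ε hε
    have hWcA : Wᶜ ⊆ Aᶜ := Set.compl_subset_compl.2 hAW
    have hWcc : IsCompact Wᶜ := hWo.isClosed_compl.isCompact
    filter_upwards [hL0s Wᶜ hWcc hWcA ε hε] with k hk
    constructor
    · intro x hx
      refine hk x (IFSApply_iter_mono _ k ?_ hx)
      exact closure_minimal (Set.compl_subset_compl.2 subset_closure) hWo.isClosed_compl
    · intro a ha
      have hsub : Bᶜ ⊆ closure ((closure W)ᶜ) := hBcW.trans subset_closure
      exact (EMetric.infEdist_zero_of_mem
        (IFSApply_iter_mono _ k hsub (hGAstar k ha))).trans_lt hε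
  · apply Set.eq_of_subset_of_subset
    · intro y hy
      simp only [conleyBasin, Set.mem_sUnion, Set.mem_setOf_eq] at hy
      obtain ⟨U, ⟨hUo, hBcU, hUlim⟩, hyU⟩ := hy
      intro hyA
      have hfar : ∀ p ∈ A, ¬ (EMetric.infEdist p Bᶜ < ENNReal.ofReal δW) := by
        intro p hp hlt
        rcases EMetric.infEdist_lt_iff.1 hlt with ⟨q, hq, hpq⟩
        refine hq (hWB (thickening_subset_cthickening δW A ?_))
        refine mem_thickening_iff_infEdist_lt.2 ?_
        exact lt_of_le_of_lt (EMetric.infEdist_le_edist_of_mem hp) (by rwa [edist_comm])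
      have hchain : ∀ k, ∃ p ∈ A, p ∈ Ga^[k] {y} := by
        intro k
        induction k with
        | zero => exact ⟨y, hyA, by simp⟩
        | succ k ih =>
          obtain ⟨p, hpA, hpG⟩ := ih
          have hp' : p ∈ Fa A := by rw [hFA]; exact hpA
          rcases Set.mem_iUnion.1 hp' with ⟨i, q, hqA, hfq⟩
          refine ⟨q, hqA, ?_⟩
          rw [Function.iterate_succ_apply']
          refine Set.mem_iUnion.2 ⟨i, p, hpG, ?_⟩
          rw [← hfq]
          exact (f i).symm_apply_apply q
      have h8 := (conley_iff (fun k => Ga^[k] (closure U)) Bᶜ).1 hUlim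
        (ENNReal.ofReal δW) (ENNReal.ofReal_pos.2 hδW)
      obtain ⟨k, hk⟩ := h8.exists
      obtain ⟨p, hpA, hpG⟩ := hchain k
      refine hfar p hpA (hk.1 p (IFSApply_iter_mono _ k ?_ hpG))
      exact Set.singleton_subset_iff.2 (subset_closure hyU)
    · intro y hyA
      obtain ⟨r, hr, hball⟩ := Metric.isOpen_iff.1 hAc.isClosed.isOpen_compl y hyA
      set O : Set X := ball y (r / 2) with hOdef
      have hOcl : closure O ⊆ Aᶜ :=
        closure_ball_subset_closedBall.trans
          ((closedBall_subset_ball (by linarith)).trans hball)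
      refine Set.mem_sUnion.2 ⟨O ∪ (closure W)ᶜ,
        ⟨isOpen_ball.union isClosed_closure.isOpen_compl,
          hBcW.trans Set.subset_union_right, ?_⟩, Or.inl (mem_ball_self (by linarith))⟩
      refine (conley_iff (fun k => Ga^[k] (closure (O ∪ (closure W)ᶜ))) Bᶜ).2 ?_
      intro ε hε
      have hS : closure (O ∪ (closure W)ᶜ) ⊆ closure O ∪ Wᶜ := by
        rw [closure_union]
        exact Set.union_subset Set.subset_union_left
          ((closure_minimal (Set.compl_subset_compl.2 subset_closure)
            hWo.isClosed_compl).trans Set.subset_union_right)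
      have hSc : IsCompact (closure O ∪ Wᶜ) :=
        (isClosed_closure.union hWo.isClosed_compl).isCompact
      have hSA : closure O ∪ Wᶜ ⊆ Aᶜ :=
        Set.union_subset hOcl (Set.compl_subset_compl.2 hAW)
      filter_upwards [hL0s _ hSc hSA ε hε] with k hk
      refine ⟨fun x hx => hk x (IFSApply_iter_mono _ k hS hx), fun a ha => ?_⟩
      have hsub : Bᶜ ⊆ closure (O ∪ (closure W)ᶜ) :=
        (hBcW.trans Set.subset_union_right).trans subset_closure
      exact (EMetric.infEdist_zero_of_mem
        (IFSApply_iter_mono _ k hsub (hGAstar k ha))).trans_lt hε
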